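/- Let N₀, P₀ ∈ ℕ, N_{ℓ₁} = N₀·2^{ℓ₁}, P_{ℓ₂} = P₀·2^{ℓ₂}. Fix L₀ ∈ ℕ₀ and for ε ∈ (0,1) set L(ε) = max(⌈log₂(ε⁻¹) + log₂ log₂(ε⁻¹)⌉ − L₀, 1) and M_ℓ(ε) = ⌈ε⁻² N_{ℓ₁}^{-4/3} P_{ℓ₂}^{-4/3}⌉. Then the total work Σ_{ℓ ∈ ℕ₀², ℓ₁+ℓ₂ ≤ L(ε)} M_ℓ(ε) · N_{ℓ₁} P_{ℓ₂} is of order ε⁻²: there exist constants 0 < c ≤ C and ε₀ ∈ (0,1) such that c ε⁻² ≤ Σ_{ℓ₁+ℓ₂ ≤ L(ε)} M_ℓ(ε) N_{ℓ₁} P_{ℓ₂} ≤ C ε⁻² for all ε ∈ (0, ε₀]. -/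
import Mathlib

open Real Finset
set_option maxHeartbeats 2000000


/-- Resolution in the timestep direction: `N_{ℓ₁} = N₀ · 2^{ℓ₁}`. -/
noncomputable def resN (N₀ : ℕ) (ℓ₁ : ℕ) : ℝ := (N₀ : ℝ) * 2 ^ ℓ₁

/-- Resolution in the ensemble-size direction: `P_{ℓ₂} = P₀ · 2^{ℓ₂}`. -/
noncomputable def resP (P₀ : ℕ) (ℓ₂ : ℕ) : ℝ := (P₀ : ℝ) * 2 ^ ℓ₂

/-- Maximal level `L(ε) = max(⌈log₂ ε⁻¹ + log₂ log₂ ε⁻¹⌉ − L₀, 1)`. -/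
noncomputable def levelL (L₀ : ℕ) (ε : ℝ) : ℕ :=
  (max (⌈Real.logb 2 ε⁻¹ + Real.logb 2 (Real.logb 2 ε⁻¹)⌉ - (L₀ : ℤ)) 1).toNat

/-- Triangular multi-index set `{ℓ ∈ ℕ₀² : ℓ₁ + ℓ₂ ≤ L}` as a finite set. -/
def idxSet (L : ℕ) : Finset (ℕ × ℕ) :=
  (Finset.range (L + 1) ×ˢ Finset.range (L + 1)).filter fun ℓ => ℓ.1 + ℓ.2 ≤ L

/-- Number of samples for the `Lᵖ` variant:
`M_ℓ(ε) = ⌈ε⁻² N_{ℓ₁}^{-4/3} P_{ℓ₂}^{-4/3}⌉`. -/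
noncomputable def numSamplesLp (N₀ P₀ : ℕ) (ε : ℝ) (ℓ : ℕ × ℕ) : ℕ :=
  ⌈ε⁻¹ ^ 2 * resN N₀ ℓ.1 ^ (-(4 : ℝ) / 3) * resP P₀ ℓ.2 ^ (-(4 : ℝ) / 3)⌉₊

private lemma geo_bound {r : ℝ} (h0 : 0 ≤ r) (h1 : r < 1) (n : ℕ) :
    ∑ j ∈ Finset.range n, r ^ j ≤ (1 - r)⁻¹ := by
  have h := Summable.sum_le_tsum (Finset.range n) (fun i _ => pow_nonneg h0 i)
    (summable_geometric_of_lt_one h0 h1)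
  rwa [tsum_geometric_of_lt_one h0 h1] at h

private lemma rpow_collapse {x : ℝ} (hx : 0 < x) :
    x ^ (-(4 : ℝ) / 3) * x = x ^ (-(1 : ℝ) / 3) := by
  rw [← Real.rpow_add_one hx.ne' (-(4 : ℝ) / 3),
    show (-(4 : ℝ) / 3 + 1) = -(1 : ℝ) / 3 by norm_num]

private lemma pow_split {x : ℝ} (hx : 0 ≤ x) (j : ℕ) :
    (x * 2 ^ j) ^ (-(1 : ℝ) / 3) = x ^ (-(1 : ℝ) / 3) * ((2 : ℝ) ^ (-(1 : ℝ) / 3)) ^ j := by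
  rw [Real.mul_rpow hx (by positivity), ← Real.rpow_natCast (2 : ℝ) j,
    ← Real.rpow_mul (by norm_num), mul_comm ((j : ℝ)), Real.rpow_mul (by norm_num),
    Real.rpow_natCast]

/-- Cost bound for the `Lᵖ` variant of the MIEnKF estimator:
`Σ_{ℓ₁+ℓ₂ ≤ L(ε)} M_ℓ(ε) N_{ℓ₁} P_{ℓ₂} ≂ ε⁻²`. -/
theorem mienkf_cost_Lp (N₀ P₀ : ℕ) (hN₀ : 0 < N₀) (hP₀ : 0 < P₀) (L₀ : ℕ) :
    ∃ c C : ℝ, 0 < c ∧ c ≤ C ∧ ∃ ε₀ : ℝ, 0 < ε₀ ∧ ε₀ < 1 ∧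
      ∀ ε : ℝ, 0 < ε → ε ≤ ε₀ →
        c * ε⁻¹ ^ 2 ≤
            ∑ ℓ ∈ idxSet (levelL L₀ ε),
              (numSamplesLp N₀ P₀ ε ℓ : ℝ) * (resN N₀ ℓ.1 * resP P₀ ℓ.2) ∧
        ∑ ℓ ∈ idxSet (levelL L₀ ε),
            (numSamplesLp N₀ P₀ ε ℓ : ℝ) * (resN N₀ ℓ.1 * resP P₀ ℓ.2)
          ≤ C * ε⁻¹ ^ 2 := by
  have hN0 : (0 : ℝ) < N₀ := by exact_mod_cast hN₀
  have hP0 : (0 : ℝ) < P₀ := by exact_mod_cast hP₀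
  set r : ℝ := (2 : ℝ) ^ (-(1 : ℝ) / 3) with hr_def
  have hr0 : 0 ≤ r := by positivity
  have hr1 : r < 1 := by
    apply Real.rpow_lt_one_of_one_lt_of_neg one_lt_two; norm_num
  set G : ℝ := (1 - r)⁻¹ with hG_def
  have hG0 : 0 < G := by
    rw [hG_def]; exact inv_pos.mpr (by linarith)
  set c : ℝ := (N₀ : ℝ) ^ (-(1 : ℝ) / 3) * (P₀ : ℝ) ^ (-(1 : ℝ) / 3) with hc_def
  have hc0 : 0 < c := by positivity
  refine ⟨c, c + c * G ^ 2 + 6912 * N₀ * P₀, hc0, by nlinarith [mul_nonneg (mul_nonneg hc0.le hG0.le) hG0.le, mul_nonneg hN0.le hP0.le], 1/4, by norm_num, by norm_num, ?_⟩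
  intro ε hε0 hε
  set L := levelL L₀ ε with hL_def
  set t : ℝ := ε⁻¹ with ht_def
  have ht0 : 0 < t := by positivity
  have ht4 : (4 : ℝ) ≤ t := by
    rw [ht_def, show (4:ℝ) = (1/4 : ℝ)⁻¹ by norm_num]
    exact inv_anti₀ hε0 hε
  set a : ℝ := Real.logb 2 t with ha_def
  have h22 : (2:ℝ) ^ (2:ℝ) = 4 := by norm_num [Real.rpow_natCast]
  have ha2 : (2 : ℝ) ≤ a := by
    rw [ha_def, Real.le_logb_iff_rpow_le one_lt_two ht0, h22]; exact ht4
  have ha0 : (0 : ℝ) < a := by linarith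
  have hlog2 : (1/2 : ℝ) ≤ Real.log 2 := by
    have := Real.log_two_gt_d9; linarith
  have hlog2pos : (0 : ℝ) < Real.log 2 := by linarith
  -- log t ≤ 3 t^{1/3}
  have hlogt : Real.log t ≤ 3 * t ^ ((1:ℝ)/3) := by
    have h1 : Real.log (t ^ ((1:ℝ)/3)) = (1/3) * Real.log t := Real.log_rpow ht0 _
    have h2 : Real.log (t ^ ((1:ℝ)/3)) ≤ t ^ ((1:ℝ)/3) - 1 :=
      Real.log_le_sub_one_of_pos (by positivity)
    nlinarith [Real.rpow_nonneg ht0.le ((1:ℝ)/3)]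
  have hlogt0 : 0 ≤ Real.log t := Real.log_nonneg (by linarith)
  have ha_le : a ≤ 6 * t ^ ((1:ℝ)/3) := by
    have : a = Real.log t / Real.log 2 := ha_def
    rw [this, div_le_iff₀ hlog2pos]
    nlinarith [Real.rpow_nonneg ht0.le ((1:ℝ)/3)]
  have hcube : (t ^ ((1:ℝ)/3)) ^ (3:ℕ) = t := by
    rw [← Real.rpow_natCast (t ^ ((1:ℝ)/3)) 3, ← Real.rpow_mul ht0.le]
    norm_num
  have ha3 : a ^ 3 ≤ 216 * t := by
    have := pow_le_pow_left₀ ha0.le ha_le 3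
    calc a ^ 3 ≤ (6 * t ^ ((1:ℝ)/3)) ^ 3 := this
      _ = 216 * (t ^ ((1:ℝ)/3)) ^ (3:ℕ) := by ring
      _ = 216 * t := by rw [hcube]
  set b : ℝ := Real.logb 2 a with hb_def
  have hb1 : (1 : ℝ) ≤ b := by
    rw [hb_def, Real.le_logb_iff_rpow_le one_lt_two ha0, Real.rpow_one]; exact ha2
  have hb_le : b ≤ 2 * a := by
    have h2 : Real.log a ≤ a - 1 := Real.log_le_sub_one_of_pos ha0
    have hloga0 : 0 ≤ Real.log a := Real.log_nonneg (by linarith)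
    have : b = Real.log a / Real.log 2 := hb_def
    rw [this, div_le_iff₀ hlog2pos]
    nlinarith
  -- relating L to a, b
  have hxL : (L : ℝ) ≤ a + b + 1 := by
    have hx3 : (3 : ℝ) ≤ a + b := by linarith
    have hceil1 : (1 : ℤ) ≤ ⌈a + b⌉ := by
      rw [Int.le_ceil_iff]; push_cast; linarith
    have hmax : max (⌈a + b⌉ - (L₀ : ℤ)) 1 ≤ ⌈a + b⌉ := by
      apply max_le _ hceil1; omega
    have hnn : (0 : ℤ) ≤ max (⌈a + b⌉ - (L₀ : ℤ)) 1 := le_trans (by norm_num) (le_max_right _ 1)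
    have hLZ : (L : ℤ) ≤ ⌈a + b⌉ := by
      rw [hL_def, levelL, ← ht_def, ← ha_def, ← hb_def, Int.toNat_of_nonneg hnn]
      exact hmax
    have := Int.ceil_lt_add_one (a + b)
    have hcast : ((L : ℤ) : ℝ) ≤ (⌈a + b⌉ : ℝ) := by exact_mod_cast hLZ
    push_cast at hcast ⊢
    linarith
  have h2L : (2 : ℝ) ^ L ≤ 2 * a * t := by
    have h1 : (2 : ℝ) ^ (L : ℕ) = (2 : ℝ) ^ ((L : ℕ) : ℝ) := (Real.rpow_natCast 2 L).symm
    have h2 : (2 : ℝ) ^ ((L : ℕ) : ℝ) ≤ (2 : ℝ) ^ (a + b + 1) :=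
      (Real.rpow_le_rpow_left_iff one_lt_two).mpr hxL
    have h3 : (2 : ℝ) ^ (a + b + 1) = (2:ℝ) ^ a * (2:ℝ) ^ b * (2:ℝ) ^ (1:ℝ) := by
      rw [← Real.rpow_add two_pos, ← Real.rpow_add two_pos]
    have h4 : (2:ℝ) ^ a = t := Real.rpow_logb two_pos (by norm_num) ht0
    have h5 : (2:ℝ) ^ b = a := Real.rpow_logb two_pos (by norm_num) ha0
    rw [h1]
    calc (2 : ℝ) ^ ((L : ℕ) : ℝ) ≤ (2 : ℝ) ^ (a + b + 1) := h2
      _ = t * a * 2 := by rw [h3, h4, h5, Real.rpow_one]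
      _ = 2 * a * t := by ring
  have hL1 : (L : ℝ) + 1 ≤ 4 * a := by linarith
  -- nonnegativity of terms
  have hterm_nn : ∀ ℓ : ℕ × ℕ,
      0 ≤ (numSamplesLp N₀ P₀ ε ℓ : ℝ) * (resN N₀ ℓ.1 * resP P₀ ℓ.2) := by
    intro ℓ
    have h1 : (0:ℝ) ≤ resN N₀ ℓ.1 := by rw [resN]; positivity
    have h2 : (0:ℝ) ≤ resP P₀ ℓ.2 := by rw [resP]; positivity
    exact mul_nonneg (Nat.cast_nonneg _) (mul_nonneg h1 h2)
  have hresN_pos : ∀ j : ℕ, (0:ℝ) < resN N₀ j := fun j => by rw [resN]; positivity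
  have hresP_pos : ∀ j : ℕ, (0:ℝ) < resP P₀ j := fun j => by rw [resP]; positivity
  constructor
  · -- lower bound
    have hmem : ((0,0) : ℕ × ℕ) ∈ idxSet L := by
      simp [idxSet]
    have hsingle := Finset.single_le_sum (f := fun ℓ : ℕ × ℕ =>
      (numSamplesLp N₀ P₀ ε ℓ : ℝ) * (resN N₀ ℓ.1 * resP P₀ ℓ.2))
      (fun ℓ _ => hterm_nn ℓ) hmem
    refine le_trans ?_ hsingle
    have hceil := Nat.le_ceil (ε⁻¹ ^ 2 * resN N₀ 0 ^ (-(4 : ℝ) / 3) * resP P₀ 0 ^ (-(4 : ℝ) / 3))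
    have hNP : (0:ℝ) ≤ resN N₀ 0 * resP P₀ 0 :=
      mul_nonneg (hresN_pos 0).le (hresP_pos 0).le
    have h := mul_le_mul_of_nonneg_right hceil hNP
    refine le_trans (le_of_eq ?_) h
    have e1 : resN N₀ 0 = (N₀ : ℝ) := by rw [resN]; norm_num
    have e2 : resP P₀ 0 = (P₀ : ℝ) := by rw [resP]; norm_num
    have c1 := rpow_collapse hN0
    have c2 := rpow_collapse hP0
    rw [e1, e2, hc_def, ← c1, ← c2]
    ring
  · -- upper bound
    have hsub : idxSet L ⊆ Finset.range (L+1) ×ˢ Finset.range (L+1) :=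
      Finset.filter_subset _ _
    -- per-term bound
    have hterm : ∀ ℓ ∈ idxSet L,
        (numSamplesLp N₀ P₀ ε ℓ : ℝ) * (resN N₀ ℓ.1 * resP P₀ ℓ.2) ≤
          ε⁻¹ ^ 2 * (resN N₀ ℓ.1 ^ (-(1:ℝ)/3) * resP P₀ ℓ.2 ^ (-(1:ℝ)/3))
            + resN N₀ ℓ.1 * resP P₀ ℓ.2 := by
      intro ℓ _
      have hx0 : (0:ℝ) ≤ ε⁻¹ ^ 2 * resN N₀ ℓ.1 ^ (-(4 : ℝ) / 3) * resP P₀ ℓ.2 ^ (-(4 : ℝ) / 3) := by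
        have := (hresN_pos ℓ.1).le; have := (hresP_pos ℓ.2).le; positivity
      have hceil : (numSamplesLp N₀ P₀ ε ℓ : ℝ) ≤
          ε⁻¹ ^ 2 * resN N₀ ℓ.1 ^ (-(4 : ℝ) / 3) * resP P₀ ℓ.2 ^ (-(4 : ℝ) / 3) + 1 :=
        le_of_lt (Nat.ceil_lt_add_one hx0)
      have hNP : (0:ℝ) ≤ resN N₀ ℓ.1 * resP P₀ ℓ.2 :=
        mul_nonneg (hresN_pos ℓ.1).le (hresP_pos ℓ.2).le
      have h := mul_le_mul_of_nonneg_right hceil hNP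
      refine le_trans h (le_of_eq ?_)
      have c1 := rpow_collapse (hresN_pos ℓ.1)
      have c2 := rpow_collapse (hresP_pos ℓ.2)
      rw [← c1, ← c2]
      ring
    have hsum1 := Finset.sum_le_sum hterm
    rw [Finset.sum_add_distrib] at hsum1
    -- bound S1
    have hS1 : ∑ ℓ ∈ idxSet L, ε⁻¹ ^ 2 * (resN N₀ ℓ.1 ^ (-(1:ℝ)/3) * resP P₀ ℓ.2 ^ (-(1:ℝ)/3))
        ≤ (c * G ^ 2) * ε⁻¹ ^ 2 := by
      rw [← Finset.mul_sum]
      rw [show (c * G ^ 2) * ε⁻¹ ^ 2 = ε⁻¹ ^ 2 * (c * G ^ 2) by ring]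
      apply mul_le_mul_of_nonneg_left _ (by positivity)
      have hsub2 : ∑ ℓ ∈ idxSet L, resN N₀ ℓ.1 ^ (-(1:ℝ)/3) * resP P₀ ℓ.2 ^ (-(1:ℝ)/3)
          ≤ ∑ ℓ ∈ Finset.range (L+1) ×ˢ Finset.range (L+1),
              resN N₀ ℓ.1 ^ (-(1:ℝ)/3) * resP P₀ ℓ.2 ^ (-(1:ℝ)/3) := by
        apply Finset.sum_le_sum_of_subset_of_nonneg hsub
        intro ℓ _ _
        have := (hresN_pos ℓ.1).le; have := (hresP_pos ℓ.2).le; positivity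
      refine le_trans hsub2 ?_
      rw [Finset.sum_product]
      have hfact : ∀ i ∈ Finset.range (L+1), ∑ j ∈ Finset.range (L+1),
          resN N₀ i ^ (-(1:ℝ)/3) * resP P₀ j ^ (-(1:ℝ)/3)
          = resN N₀ i ^ (-(1:ℝ)/3) * ∑ j ∈ Finset.range (L+1), resP P₀ j ^ (-(1:ℝ)/3) := by
        intro i _; rw [Finset.mul_sum]
      rw [Finset.sum_congr rfl hfact, ← Finset.sum_mul]
      have hNsum : ∑ i ∈ Finset.range (L+1), resN N₀ i ^ (-(1:ℝ)/3)
          ≤ (N₀:ℝ) ^ (-(1:ℝ)/3) * G := by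
        have : ∀ i ∈ Finset.range (L+1), resN N₀ i ^ (-(1:ℝ)/3)
            = (N₀:ℝ) ^ (-(1:ℝ)/3) * r ^ i := by
          intro i _; rw [resN]; exact pow_split hN0.le i
        rw [Finset.sum_congr rfl this, ← Finset.mul_sum]
        exact mul_le_mul_of_nonneg_left (geo_bound hr0 hr1 _) (by positivity)
      have hPsum : ∑ j ∈ Finset.range (L+1), resP P₀ j ^ (-(1:ℝ)/3)
          ≤ (P₀:ℝ) ^ (-(1:ℝ)/3) * G := by
        have : ∀ j ∈ Finset.range (L+1), resP P₀ j ^ (-(1:ℝ)/3)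
            = (P₀:ℝ) ^ (-(1:ℝ)/3) * r ^ j := by
          intro j _; rw [resP]; exact pow_split hP0.le j
        rw [Finset.sum_congr rfl this, ← Finset.mul_sum]
        exact mul_le_mul_of_nonneg_left (geo_bound hr0 hr1 _) (by positivity)
      have hNsum0 : (0:ℝ) ≤ ∑ i ∈ Finset.range (L+1), resN N₀ i ^ (-(1:ℝ)/3) := by
        apply Finset.sum_nonneg; intro i _; have := (hresN_pos i).le; positivity
      have hPsum0 : (0:ℝ) ≤ ∑ j ∈ Finset.range (L+1), resP P₀ j ^ (-(1:ℝ)/3) := by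
        apply Finset.sum_nonneg; intro j _; have := (hresP_pos j).le; positivity
      calc (∑ i ∈ Finset.range (L+1), resN N₀ i ^ (-(1:ℝ)/3))
            * ∑ j ∈ Finset.range (L+1), resP P₀ j ^ (-(1:ℝ)/3)
          ≤ ((N₀:ℝ) ^ (-(1:ℝ)/3) * G) * ((P₀:ℝ) ^ (-(1:ℝ)/3) * G) := by
            apply mul_le_mul hNsum hPsum hPsum0 (by positivity)
        _ = c * G ^ 2 := by rw [hc_def]; ring
    -- bound S2
    have hS2 : ∑ ℓ ∈ idxSet L, resN N₀ ℓ.1 * resP P₀ ℓ.2 ≤ (6912 * N₀ * P₀) * ε⁻¹ ^ 2 := by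
      have hcard : (idxSet L).card ≤ (L+1) * (L+1) := by
        calc (idxSet L).card ≤ (Finset.range (L+1) ×ˢ Finset.range (L+1)).card :=
              Finset.card_filter_le _ _
          _ = (L+1) * (L+1) := by rw [Finset.card_product, Finset.card_range]
      have hbound : ∀ ℓ ∈ idxSet L, resN N₀ ℓ.1 * resP P₀ ℓ.2 ≤ (N₀:ℝ) * P₀ * 2 ^ L := by
        intro ℓ hℓ
        have hle : ℓ.1 + ℓ.2 ≤ L := (Finset.mem_filter.mp hℓ).2
        have h2 : (2:ℝ) ^ (ℓ.1 + ℓ.2) ≤ 2 ^ L := pow_le_pow_right₀ one_le_two hle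
        rw [resN, resP]
        calc (N₀:ℝ) * 2 ^ ℓ.1 * ((P₀:ℝ) * 2 ^ ℓ.2) = (N₀:ℝ) * P₀ * 2 ^ (ℓ.1 + ℓ.2) := by
              rw [pow_add]; ring
          _ ≤ (N₀:ℝ) * P₀ * 2 ^ L := by
              apply mul_le_mul_of_nonneg_left h2 (by positivity)
      have hsum2 := Finset.sum_le_card_nsmul (idxSet L) _ _ hbound
      rw [nsmul_eq_mul] at hsum2
      have hcard' : ((idxSet L).card : ℝ) ≤ ((L:ℝ)+1) * ((L:ℝ)+1) := by
        exact_mod_cast hcard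
      have hstep : ((idxSet L).card : ℝ) * ((N₀:ℝ) * P₀ * 2 ^ L)
          ≤ (((L:ℝ)+1) * ((L:ℝ)+1)) * ((N₀:ℝ) * P₀ * (2 * a * t)) := by
        apply mul_le_mul hcard' _ (by positivity) (by positivity)
        exact mul_le_mul_of_nonneg_left h2L (by positivity)
      refine le_trans hsum2 (le_trans hstep ?_)
      have hsq : ((L:ℝ)+1) * ((L:ℝ)+1) ≤ (4*a) * (4*a) := by
        have h0 : (0:ℝ) ≤ (L:ℝ) + 1 := by positivity
        exact mul_le_mul hL1 hL1 h0 (by positivity)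
      calc (((L:ℝ)+1) * ((L:ℝ)+1)) * ((N₀:ℝ) * P₀ * (2 * a * t))
          ≤ ((4*a) * (4*a)) * ((N₀:ℝ) * P₀ * (2 * a * t)) := by
            apply mul_le_mul_of_nonneg_right hsq (by positivity)
        _ = 32 * (N₀:ℝ) * P₀ * (a^3 * t) := by ring
        _ ≤ 32 * (N₀:ℝ) * P₀ * ((216 * t) * t) := by
            apply mul_le_mul_of_nonneg_left _ (by positivity)
            exact mul_le_mul_of_nonneg_right ha3 ht0.le
        _ = (6912 * N₀ * P₀) * t ^ 2 := by ring
        _ = (6912 * N₀ * P₀) * ε⁻¹ ^ 2 := by rw [ht_def]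
    calc ∑ ℓ ∈ idxSet L, (numSamplesLp N₀ P₀ ε ℓ : ℝ) * (resN N₀ ℓ.1 * resP P₀ ℓ.2)
        ≤ (∑ ℓ ∈ idxSet L, ε⁻¹ ^ 2 * (resN N₀ ℓ.1 ^ (-(1:ℝ)/3) * resP P₀ ℓ.2 ^ (-(1:ℝ)/3)))
          + ∑ ℓ ∈ idxSet L, resN N₀ ℓ.1 * resP P₀ ℓ.2 := hsum1
      _ ≤ (c * G ^ 2) * ε⁻¹ ^ 2 + (6912 * N₀ * P₀) * ε⁻¹ ^ 2 := add_le_add hS1 hS2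
      _ ≤ (c + c * G ^ 2 + 6912 * N₀ * P₀) * ε⁻¹ ^ 2 := by
            have h := mul_nonneg hc0.le (sq_nonneg ε⁻¹)
            linarith
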